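/- For all real λ ∈ [0,1) and all real x ≥ -1, exp(λx + x²(λ + log(1-λ))) ≤ 1 + λx. -/

import Mathlib

theorem exp_ineq_fgl (l x : ℝ) (hl0 : 0 ≤ l) (hl1 : l < 1) (hx : -1 ≤ x) :
    Real.exp (l * x + x ^ 2 * (l + Real.log (1 - l))) ≤ 1 + l * x := by
  set F : ℝ → ℝ := fun t => Real.log (1 + t * x) - t * x - x ^ 2 * (t + Real.log (1 - t))
    with hF
  -- derivative of F at points t ∈ [0, l]
  have hderiv : ∀ t ∈ Set.Icc (0:ℝ) l, HasDerivAt F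
      (x / (1 + t * x) - x - x ^ 2 * (1 + (-1) / (1 - t))) t := by
    intro t ht
    obtain ⟨ht0, htl⟩ := ht
    have ht1 : 0 < 1 - t := by linarith
    have ht2 : 0 < 1 + t * x := by nlinarith [mul_nonneg ht0 (by linarith : (0:ℝ) ≤ x + 1)]
    have h1 : HasDerivAt (fun t : ℝ => 1 + t * x) x t := by
      simpa using ((hasDerivAt_id t).mul_const x).const_add 1
    have h2 : HasDerivAt (fun t : ℝ => 1 - t) (-1) t := by
      simpa using (hasDerivAt_id t).const_sub 1
    have hA : HasDerivAt (fun t : ℝ => Real.log (1 + t * x) - t * x)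
        (x / (1 + t * x) - x) t := by
      exact (h1.log ht2.ne').sub (by simpa using (hasDerivAt_id t).mul_const x)
    have hB : HasDerivAt (fun t : ℝ => x ^ 2 * (t + Real.log (1 - t)))
        (x ^ 2 * (1 + (-1) / (1 - t))) t :=
      ((hasDerivAt_id t).add (h2.log ht1.ne')).const_mul (x ^ 2)
    exact hA.sub hB
  -- the derivative is nonnegative on [0, l]
  have hderiv_nonneg : ∀ t ∈ Set.Icc (0:ℝ) l,
      0 ≤ x / (1 + t * x) - x - x ^ 2 * (1 + (-1) / (1 - t)) := by
    intro t ht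
    obtain ⟨ht0, htl⟩ := ht
    have ht1 : 0 < 1 - t := by linarith
    have ht2 : 0 < 1 + t * x := by nlinarith [mul_nonneg ht0 (by linarith : (0:ℝ) ≤ x + 1)]
    have key : x / (1 + t * x) - x - x ^ 2 * (1 + (-1) / (1 - t))
        = t ^ 2 * x ^ 2 * (x + 1) / ((1 - t) * (1 + t * x)) := by
      field_simp [ht1.ne', (by rw [mul_comm]; exact ht2.ne' : 1 + x * t ≠ 0)]
      ring
    rw [key]
    apply div_nonneg
    · have : 0 ≤ t ^ 2 * x ^ 2 := by positivity
      nlinarith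
    · positivity
  -- F is monotone on [0, l]
  have hmono : MonotoneOn F (Set.Icc 0 l) := by
    apply monotoneOn_of_deriv_nonneg (convex_Icc 0 l)
    · exact fun t ht => (hderiv t ht).continuousAt.continuousWithinAt
    · intro t ht
      rw [interior_Icc] at ht
      exact ((hderiv t ⟨le_of_lt ht.1, le_of_lt ht.2⟩).differentiableAt).differentiableWithinAt
    · intro t ht
      rw [interior_Icc] at ht
      have ht' : t ∈ Set.Icc (0:ℝ) l := ⟨le_of_lt ht.1, le_of_lt ht.2⟩
      rw [(hderiv t ht').deriv]
      exact hderiv_nonneg t ht'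
  have hF0 : F 0 = 0 := by simp [hF]
  have hFl : 0 ≤ F l := by
    have := hmono (Set.left_mem_Icc.mpr hl0) (Set.right_mem_Icc.mpr hl0) hl0
    rwa [hF0] at this
  have hpos : 0 < 1 + l * x := by nlinarith [mul_nonneg hl0 (by linarith : (0:ℝ) ≤ x + 1)]
  have hle : l * x + x ^ 2 * (l + Real.log (1 - l)) ≤ Real.log (1 + l * x) := by
    simp only [hF] at hFl; linarith
  calc Real.exp (l * x + x ^ 2 * (l + Real.log (1 - l)))
      ≤ Real.exp (Real.log (1 + l * x)) := Real.exp_le_exp.mpr hle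
    _ = 1 + l * x := Real.exp_log hpos
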